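/- Let n be a natural number and t a real number with −1 ≤ t ≤ 1. Then there exists a sequence of signs ε_0, ..., ε_n, each equal to 1 or −1, such that |arcsin(t)/2 − ∑_{j=0}^{n} ε_j · arctan(2^{−j})| ≤ 2^{−n}. -/

import Mathlib

open Real Finset

private noncomputable def cordicA (j : ℕ) : ℝ := Real.arctan ((2 : ℝ) ^ (-(j : ℤ)))

private lemma cordicA_nonneg (j : ℕ) : 0 ≤ cordicA j := by
  have : (0:ℝ) = Real.arctan 0 := Real.arctan_zero.symm
  rw [cordicA, this]
  exact (Real.arctan_strictMono.monotone (by positivity))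

private lemma cordicA_double (j : ℕ) : cordicA j ≤ 2 * cordicA (j + 1) := by
  simp only [cordicA]
  set x : ℝ := (2 : ℝ) ^ (-((j + 1 : ℕ) : ℤ)) with hx
  have hx0 : 0 < x := by positivity
  have hxle : x ≤ 1 / 2 := by
    calc x ≤ (2:ℝ)^(-1:ℤ) := by
          rw [hx]; apply zpow_le_zpow_right₀ one_le_two; push_cast; omega
      _ = 1/2 := by norm_num
  have hx1 : x < 1 := lt_of_le_of_lt hxle (by norm_num)
  have h2 : 2 * Real.arctan x = Real.arctan (2 * x / (1 - x ^ 2)) :=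
    Real.two_mul_arctan (by linarith) hx1
  have hkey : 2 * x = (2:ℝ) ^ (-(j : ℤ)) := by
    have h : (-((j+1:ℕ):ℤ)) + 1 = -(j:ℤ) := by push_cast; ring
    calc 2 * x = (2:ℝ)^(-((j+1:ℕ):ℤ)) * (2:ℝ)^(1:ℤ) := by rw [hx]; norm_num [mul_comm]
      _ = (2:ℝ)^(-((j+1:ℕ):ℤ) + 1) := (zpow_add₀ two_ne_zero _ _).symm
      _ = (2:ℝ)^(-(j:ℤ)) := by rw [h]
  rw [← hkey, h2]
  apply Real.arctan_strictMono.monotone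
  rw [div_eq_mul_inv]
  have h1x : 0 < 1 - x ^ 2 := by nlinarith
  have : (1:ℝ) ≤ (1 - x ^ 2)⁻¹ := by
    rw [le_inv_comm₀ (by norm_num) h1x]; nlinarith
  nlinarith

private lemma cordicA_le (j : ℕ) : cordicA j ≤ (2 : ℝ) ^ (-(j : ℤ)) := by
  set x : ℝ := (2 : ℝ) ^ (-(j : ℤ)) with hx
  have hx0 : 0 < x := by positivity
  have h1 : Real.arctan x < π / 2 := Real.arctan_lt_pi_div_two x
  have h2 : 0 < Real.arctan x := by
    have : Real.arctan 0 < Real.arctan x := Real.arctan_strictMono hx0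
    simpa using this
  have := Real.lt_tan h2 h1
  rw [Real.tan_arctan] at this
  exact le_of_lt this

private lemma cordicA_chain : ∀ (m k : ℕ),
    cordicA k ≤ (∑ i ∈ Finset.range m, cordicA (k + 1 + i)) + cordicA (k + m) := by
  intro m
  induction m with
  | zero => intro k; simp
  | succ m ih =>
    intro k
    have h2 := ih (k + 1)
    have heq : (∑ i ∈ Finset.range (m + 1), cordicA (k + 1 + i))
        = cordicA (k + 1) + ∑ i ∈ Finset.range m, cordicA (k + 1 + 1 + i) := by
      rw [Finset.sum_range_succ']
      simp only [Nat.add_zero]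
      rw [add_comm]
      congr 1
      apply Finset.sum_congr rfl
      intro i _
      congr 1
      omega
    rw [heq, show k + (m + 1) = k + 1 + m from by omega]
    have h1 := cordicA_double k
    linarith

private lemma cordic_key : ∀ (m k : ℕ) (θ : ℝ),
    |θ| ≤ (∑ i ∈ Finset.range (m + 1), cordicA (k + i)) + cordicA (k + m) →
    ∃ ε : ℕ → ℝ, (∀ j, k ≤ j → j ≤ k + m → ε j = 1 ∨ ε j = -1) ∧
      |θ - ∑ i ∈ Finset.range (m + 1), ε (k + i) * cordicA (k + i)| ≤ cordicA (k + m) := by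
  intro m
  induction m with
  | zero =>
    intro k θ hθ
    simp only [zero_add, Finset.sum_range_one, Nat.add_zero] at hθ ⊢
    rw [abs_le] at hθ
    by_cases h : 0 ≤ θ
    · refine ⟨fun _ => 1, fun _ _ _ => Or.inl rfl, ?_⟩
      dsimp only
      rw [abs_le]
      constructor <;> [linarith [hθ.1, cordicA_nonneg k]; linarith [hθ.2]]
    · push_neg at h
      refine ⟨fun _ => -1, fun _ _ _ => Or.inr rfl, ?_⟩
      dsimp only
      rw [abs_le]
      constructor <;> [linarith [hθ.1]; linarith [hθ.2, cordicA_nonneg k]]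
  | succ m ih =>
    intro k θ hθ
    set ε₀ : ℝ := if 0 ≤ θ then 1 else -1 with hε₀
    set θ' : ℝ := θ - ε₀ * cordicA k with hθ'
    have hrest : (∑ i ∈ Finset.range (m + 1 + 1), cordicA (k + i))
        = cordicA k + ∑ i ∈ Finset.range (m + 1), cordicA (k + 1 + i) := by
      rw [Finset.sum_range_succ']
      simp only [Nat.add_zero]
      rw [add_comm]
      congr 1
      apply Finset.sum_congr rfl
      intro i _
      congr 1
      omega
    have hchain : cordicA k ≤ (∑ i ∈ Finset.range (m + 1), cordicA (k + 1 + i)) + cordicA (k + (m + 1)) := by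
      have := cordicA_chain (m + 1) k
      exact this
    have hθ'bound : |θ'| ≤ (∑ i ∈ Finset.range (m + 1), cordicA (k + 1 + i)) + cordicA (k + 1 + m) := by
      rw [hrest] at hθ
      rw [show k + 1 + m = k + (m + 1) from by omega]
      rw [abs_le] at hθ ⊢
      have ha := cordicA_nonneg k
      constructor <;> rw [hθ', hε₀] <;> split <;> [skip; push_neg at *; skip; push_neg at *] <;> nlinarith [hθ.1, hθ.2]
    obtain ⟨ε', hε'sign, hε'⟩ := ih (k + 1) θ' hθ'bound
    refine ⟨fun j => if j = k then ε₀ else ε' j, ?_, ?_⟩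
    · intro j hj1 hj2
      dsimp only
      by_cases hjk : j = k
      · rw [if_pos hjk, hε₀]; split <;> simp
      · rw [if_neg hjk]
        exact hε'sign j (by omega) (by omega)
    · have hsum : (∑ i ∈ Finset.range (m + 1 + 1),
          (if k + i = k then ε₀ else ε' (k + i)) * cordicA (k + i))
          = ε₀ * cordicA k + ∑ i ∈ Finset.range (m + 1), ε' (k + 1 + i) * cordicA (k + 1 + i) := by
        rw [Finset.sum_range_succ']
        simp only [Nat.add_zero, if_pos rfl]
        rw [add_comm]
        congr 1
        apply Finset.sum_congr rfl
        intro i _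
        rw [if_neg (by omega)]
        congr 2 <;> omega
      dsimp only
      rw [hsum]
      have heq2 : θ - (ε₀ * cordicA k + ∑ i ∈ Finset.range (m + 1), ε' (k + 1 + i) * cordicA (k + 1 + i))
          = θ' - ∑ i ∈ Finset.range (m + 1), ε' (k + 1 + i) * cordicA (k + 1 + i) := by
        rw [hθ']; ring
      rw [heq2, show k + (m + 1) = k + 1 + m from by omega]
      exact hε'

theorem cordic_arcsin_decomposition (n : ℕ) (t : ℝ) (ht0 : -1 ≤ t) (ht1 : t ≤ 1) :
    ∃ ε : ℕ → ℝ, (∀ j ≤ n, ε j = 1 ∨ ε j = -1) ∧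
      |Real.arcsin t / 2 -
          ∑ j ∈ Finset.range (n + 1), ε j * Real.arctan ((2 : ℝ) ^ (-(j : ℤ)))| ≤
        (2 : ℝ) ^ (-(n : ℤ)) := by
  have hbound : |Real.arcsin t / 2| ≤ (∑ i ∈ Finset.range (n + 1), cordicA (0 + i)) + cordicA (0 + n) := by
    have h1 : |Real.arcsin t| ≤ π / 2 :=
      abs_le.mpr ⟨Real.neg_pi_div_two_le_arcsin t, Real.arcsin_le_pi_div_two t⟩
    have h2 : |Real.arcsin t / 2| ≤ π / 4 := by
      calc |Real.arcsin t / 2| = |Real.arcsin t| / 2 := by rw [abs_div]; norm_num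
        _ ≤ (π / 2) / 2 := by linarith
        _ = π / 4 := by ring
    have h3 : cordicA 0 = π / 4 := by
      simp [cordicA, Real.arctan_one]
    have h4 : cordicA 0 ≤ ∑ i ∈ Finset.range (n + 1), cordicA (0 + i) := by
      have : cordicA (0 + 0) ≤ ∑ i ∈ Finset.range (n + 1), cordicA (0 + i) :=
        Finset.single_le_sum (fun i _ => cordicA_nonneg (0 + i)) (Finset.mem_range.mpr (by omega))
      simpa using this
    have h5 := cordicA_nonneg (0 + n)
    linarith
  obtain ⟨ε, hsign, hε⟩ := cordic_key n 0 (Real.arcsin t / 2) hbound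
  refine ⟨ε, fun j hj => hsign j (by omega) (by omega), ?_⟩
  simp only [Nat.zero_add] at hε
  calc |Real.arcsin t / 2 - ∑ j ∈ Finset.range (n + 1), ε j * Real.arctan ((2 : ℝ) ^ (-(j : ℤ)))|
      ≤ cordicA n := hε
    _ ≤ (2 : ℝ) ^ (-(n : ℤ)) := cordicA_le n
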